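/- Let P be an n×n row-stochastic matrix (nonnegative entries, rows summing to 1). Then the Cesàro averages (1/(N+1)) ∑_{j=0}^{N} P^j converge as N → ∞ to a matrix P* satisfying P·P* = P*·P = P*·P* = P*. -/

import Mathlib

open Filter Topology

theorem stmt5 {n : ℕ} (P : Matrix (Fin n) (Fin n) ℝ)
    (hnn : ∀ i j, 0 ≤ P i j) (hrow : ∀ i, ∑ j, P i j = 1) :
    ∃ Pstar : Matrix (Fin n) (Fin n) ℝ,
      (∀ i j, Tendsto
        (fun N : ℕ => ((N : ℝ) + 1)⁻¹ * ∑ k ∈ Finset.range (N + 1), (P ^ k) i j)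
        atTop (𝓝 (Pstar i j))) ∧
      P * Pstar = Pstar ∧ Pstar * P = Pstar ∧ Pstar * Pstar = Pstar := by
  have hpow_nn : ∀ k i j, 0 ≤ (P ^ k) i j := by
    intro k
    induction k with
    | zero =>
      intro i j; rw [pow_zero]
      by_cases h : i = j <;> simp [Matrix.one_apply, h]
    | succ k ih =>
      intro i j
      rw [pow_succ, Matrix.mul_apply]
      exact Finset.sum_nonneg fun l _ => mul_nonneg (ih i l) (hnn l j)
  have hpow_row : ∀ k i, ∑ j, (P ^ k) i j = 1 := by
    intro k
    induction k with
    | zero => intro i; simp [Matrix.one_apply]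
    | succ k ih =>
      intro i
      simp only [pow_succ, Matrix.mul_apply]
      rw [Finset.sum_comm]
      calc ∑ l, ∑ j, (P ^ k) i l * P l j
          = ∑ l, (P ^ k) i l * ∑ j, P l j := by
            simp [Finset.mul_sum]
        _ = 1 := by simp [hrow, ih i]
  have hpow_le : ∀ k i j, (P ^ k) i j ≤ 1 := by
    intro k i j
    calc (P ^ k) i j ≤ ∑ j', (P ^ k) i j' :=
      Finset.single_le_sum (fun j' _ => hpow_nn k i j') (Finset.mem_univ j)
    _ = 1 := hpow_row k i
  set S : ℕ → Matrix (Fin n) (Fin n) ℝ :=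
    fun N => ((N : ℝ) + 1)⁻¹ • ∑ k ∈ Finset.range (N + 1), P ^ k with hS
  have hNne : ∀ N : ℕ, ((N : ℝ) + 1) ≠ 0 := fun N => by positivity
  have hSapp : ∀ N i j, S N i j = ((N : ℝ) + 1)⁻¹ * ∑ k ∈ Finset.range (N + 1), (P ^ k) i j := by
    intro N i j
    simp [hS, Matrix.sum_apply]
  have hmem : ∀ N i j, S N i j ∈ Set.Icc (0 : ℝ) 1 := by
    intro N i j
    rw [hSapp]
    constructor
    · exact mul_nonneg (by positivity) (Finset.sum_nonneg fun k _ => hpow_nn k i j)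
    · have h1 : ∑ k ∈ Finset.range (N + 1), (P ^ k) i j ≤ (N : ℝ) + 1 := by
        calc ∑ k ∈ Finset.range (N + 1), (P ^ k) i j ≤ ∑ k ∈ Finset.range (N + 1), (1 : ℝ) :=
          Finset.sum_le_sum fun k _ => hpow_le k i j
        _ = (N : ℝ) + 1 := by simp
      calc ((N : ℝ) + 1)⁻¹ * ∑ k ∈ Finset.range (N + 1), (P ^ k) i j
          ≤ ((N : ℝ) + 1)⁻¹ * ((N : ℝ) + 1) := by
            exact mul_le_mul_of_nonneg_left h1 (by positivity)
        _ = 1 := inv_mul_cancel₀ (hNne N)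
  -- key identity
  have hid : ∀ N, S N * P - S N = ((N : ℝ) + 1)⁻¹ • (P ^ (N + 1) - 1) := by
    intro N
    have h1 : (∑ k ∈ Finset.range (N + 1), P ^ k) * P - ∑ k ∈ Finset.range (N + 1), P ^ k
        = P ^ (N + 1) - 1 := by
      rw [Finset.sum_mul]
      have h2 : ∀ k ∈ Finset.range (N + 1), P ^ k * P = P ^ (k + 1) :=
        fun k _ => (pow_succ P k).symm
      rw [Finset.sum_congr rfl h2, ← Finset.sum_sub_distrib,
        Finset.sum_range_sub (fun k => P ^ k), pow_zero]
    rw [hS]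
    simp only [Matrix.smul_mul, ← smul_sub, h1]
  have hinv0 : Tendsto (fun N : ℕ => ((N : ℝ) + 1)⁻¹) atTop (𝓝 0) := by
    simpa [one_div] using tendsto_one_div_add_atTop_nhds_zero_nat (𝕜 := ℝ)
  have h0 : Tendsto (fun N => S N * P - S N) atTop (𝓝 (0 : Matrix (Fin n) (Fin n) ℝ)) := by
    refine tendsto_pi_nhds.mpr ?_; intro i
    rw [tendsto_pi_nhds]; intro j
    simp only [hid, Matrix.smul_apply, Matrix.zero_apply, smul_eq_mul]
    refine squeeze_zero_norm (fun N => ?_) hinv0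
    have hb : |(P ^ (N + 1) - 1) i j| ≤ 1 := by
      have h1 := hpow_nn (N + 1) i j
      have h2 := hpow_le (N + 1) i j
      have h3 : (0 : ℝ) ≤ (1 : Matrix (Fin n) (Fin n) ℝ) i j := by
        by_cases h : i = j <;> simp [Matrix.one_apply, h]
      have h4 : (1 : Matrix (Fin n) (Fin n) ℝ) i j ≤ 1 := by
        by_cases h : i = j <;> simp [Matrix.one_apply, h]
      rw [Matrix.sub_apply, abs_le]
      constructor <;> nlinarith
    calc ‖((N : ℝ) + 1)⁻¹ * (P ^ (N + 1) - 1) i j‖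
        = ((N : ℝ) + 1)⁻¹ * |(P ^ (N + 1) - 1) i j| := by
          rw [norm_mul, Real.norm_eq_abs, Real.norm_eq_abs,
            abs_of_nonneg (by positivity : (0:ℝ) ≤ ((N:ℝ)+1)⁻¹)]
      _ ≤ ((N : ℝ) + 1)⁻¹ * 1 := mul_le_mul_of_nonneg_left hb (by positivity)
      _ = ((N : ℝ) + 1)⁻¹ := mul_one _
  have hcomm : ∀ N, P * S N = S N * P := by
    intro N
    rw [hS]
    simp only [Matrix.mul_smul, Matrix.smul_mul, Finset.mul_sum, Finset.sum_mul]
    congr 1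
    refine Finset.sum_congr rfl fun k _ => ?_
    rw [← pow_succ, ← pow_succ']
  -- any subsequential limit L satisfies L*P = L = P*L
  have key : ∀ (L : Matrix (Fin n) (Fin n) ℝ) (ψ : ℕ → ℕ), Tendsto ψ atTop atTop →
      Tendsto (fun N => S (ψ N)) atTop (𝓝 L) → L * P = L ∧ P * L = L := by
    intro L ψ hψ hL
    have h1 : Tendsto (fun N => S (ψ N) * P - S (ψ N)) atTop (𝓝 (L * P - L)) :=
      (hL.mul tendsto_const_nhds).sub hL
    have h2 : Tendsto (fun N => S (ψ N) * P - S (ψ N)) atTop (𝓝 0) := h0.comp hψ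
    have h3 : L * P - L = 0 := tendsto_nhds_unique h1 h2
    have h4 : L * P = L := by rwa [sub_eq_zero] at h3
    refine ⟨h4, ?_⟩
    have h5 : Tendsto (fun N => P * S (ψ N)) atTop (𝓝 (P * L)) := tendsto_const_nhds.mul hL
    have h6 : Tendsto (fun N => P * S (ψ N)) atTop (𝓝 (L * P)) := by
      simp only [hcomm]
      exact hL.mul tendsto_const_nhds
    rw [tendsto_nhds_unique h5 h6, h4]
  -- from L*P = L we get L * S N = L; from P*L = L we get S N * L = L
  have habsorb : ∀ (L : Matrix (Fin n) (Fin n) ℝ), L * P = L → ∀ N, L * S N = L := by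
    intro L hLP N
    have hk : ∀ k, L * P ^ k = L := by
      intro k
      induction k with
      | zero => simp
      | succ k ih => rw [pow_succ, ← mul_assoc, ih, hLP]
    rw [hS]
    simp only [Matrix.mul_smul, Finset.mul_sum, hk]
    rw [Finset.sum_const, Finset.card_range, ← Nat.cast_smul_eq_nsmul ℝ, smul_smul]
    push_cast
    rw [inv_mul_cancel₀ (hNne N), one_smul]
  have habsorb' : ∀ (L : Matrix (Fin n) (Fin n) ℝ), P * L = L → ∀ N, S N * L = L := by
    intro L hPL N
    have hk : ∀ k, P ^ k * L = L := by
      intro k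
      induction k with
      | zero => simp
      | succ k ih => rw [pow_succ, mul_assoc, hPL, ih]
    rw [hS]
    simp only [Matrix.smul_mul, Finset.sum_mul, hk]
    rw [Finset.sum_const, Finset.card_range, ← Nat.cast_smul_eq_nsmul ℝ, smul_smul]
    push_cast
    rw [inv_mul_cancel₀ (hNne N), one_smul]
  -- compactness
  have hK : IsCompact {M : Matrix (Fin n) (Fin n) ℝ | ∀ i j, M i j ∈ Set.Icc (0:ℝ) 1} := by
    have : {M : Matrix (Fin n) (Fin n) ℝ | ∀ i j, M i j ∈ Set.Icc (0:ℝ) 1}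
        = Set.univ.pi fun _ : Fin n => Set.univ.pi fun _ : Fin n => Set.Icc (0:ℝ) 1 := by
      ext M
      constructor
      · intro h
        exact Set.mem_univ_pi.mpr fun i => Set.mem_univ_pi.mpr fun j => h i j
      · intro h i j
        exact Set.mem_univ_pi.mp (Set.mem_univ_pi.mp h i) j
    rw [this]
    exact isCompact_univ_pi fun i => isCompact_univ_pi fun j => isCompact_Icc
  haveI : FirstCountableTopology (Matrix (Fin n) (Fin n) ℝ) :=
    inferInstanceAs (FirstCountableTopology (Fin n → Fin n → ℝ))
  obtain ⟨Q, hQK, φ, hφ, hQ⟩ := hK.tendsto_subseq (x := S) (fun N => fun i j => hmem N i j)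
  have hQ' : Tendsto (fun N => S (φ N)) atTop (𝓝 Q) := hQ
  obtain ⟨hQP, hPQ⟩ := key Q φ hφ.tendsto_atTop hQ'
  -- uniqueness of subsequential limits
  have huniq : ∀ (L : Matrix (Fin n) (Fin n) ℝ) (ψ : ℕ → ℕ), Tendsto ψ atTop atTop →
      Tendsto (fun N => S (ψ N)) atTop (𝓝 L) → L = Q := by
    intro L ψ hψ hL
    obtain ⟨hLP, hPL⟩ := key L ψ hψ hL
    -- Q * L = Q :
    have e1 : Tendsto (fun N => Q * S (ψ N)) atTop (𝓝 (Q * L)) := tendsto_const_nhds.mul hL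
    have e2 : Tendsto (fun N => Q * S (ψ N)) atTop (𝓝 Q) := by
      simp only [habsorb Q hQP]
      exact tendsto_const_nhds
    have hQL : Q * L = Q := tendsto_nhds_unique e1 e2
    -- Q * L = L :
    have e3 : Tendsto (fun N => S (φ N) * L) atTop (𝓝 (Q * L)) := hQ'.mul tendsto_const_nhds
    have e4 : Tendsto (fun N => S (φ N) * L) atTop (𝓝 L) := by
      simp only [habsorb' L hPL]
      exact tendsto_const_nhds
    have hQL' : Q * L = L := tendsto_nhds_unique e3 e4
    rw [← hQL', hQL]
  -- full convergence
  have hmain : Tendsto S atTop (𝓝 Q) := by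
    apply tendsto_of_subseq_tendsto
    intro ns hns
    obtain ⟨L, _, ms, hms, hLlim⟩ :=
      hK.tendsto_subseq (x := fun N => S (ns N)) (fun N => fun i j => hmem (ns N) i j)
    refine ⟨ms, ?_⟩
    have hcomp : Tendsto (fun N => S (ns (ms N))) atTop (𝓝 L) := hLlim
    have : L = Q := huniq L (ns ∘ ms) (hns.comp hms.tendsto_atTop) hcomp
    rw [← this]
    exact hcomp
  -- Q * Q = Q
  have hQQ : Q * Q = Q := by
    have e1 : Tendsto (fun N => Q * S (φ N)) atTop (𝓝 (Q * Q)) := tendsto_const_nhds.mul hQ'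
    have e2 : Tendsto (fun N => Q * S (φ N)) atTop (𝓝 Q) := by
      simp only [habsorb Q hQP]
      exact tendsto_const_nhds
    exact tendsto_nhds_unique e1 e2
  refine ⟨Q, ?_, hPQ, hQP, hQQ⟩
  intro i j
  have h1 := tendsto_pi_nhds.mp (tendsto_pi_nhds.mp hmain i) j
  simpa only [hSapp] using h1
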